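/- arXiv:1009.1630 — 3 statements merged into one kernel-verified Lean document; each statement's English description precedes it below -/
import Mathlib

section
/- Let β > 0 be a real number, N ≥ 1 a natural number, and E₀ a real number. Then the limit as E₁ → ∞ of the integral from E₀ to E₁ of the function E ↦ (1 + e^{β(E−E₀)}/N)⁻¹ equals ln(N+1)/β. (This is the total work extracted by the quasistatic process that lowers N initially empty degenerate levels from energy +∞ down to E₀ while the system is in contact with a heat bath at inverse temperature β.) -/
open MeasureTheory Filter

/-- Work extraction (Theorem 4 of the appendix): for inverse temperature `β > 0`,
`N ≥ 1` initially empty degenerate levels, and base energy `E₀`, the limit as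
`E₁ → ∞` of `∫_{E₀}^{E₁} (1 + e^{β(E−E₀)}/N)⁻¹ dE` equals `ln(N+1)/β`. -/
theorem work_extraction_limit (β : ℝ) (hβ : 0 < β) (N : ℕ) (hN : 1 ≤ N) (E₀ : ℝ) :
    Tendsto (fun E₁ : ℝ => ∫ E in E₀..E₁, (1 + Real.exp (β * (E - E₀)) / (N : ℝ))⁻¹)
      atTop (nhds (Real.log ((N : ℝ) + 1) / β)) := by
  have hN0 : (0:ℝ) < N := by exact_mod_cast Nat.lt_of_lt_of_le Nat.zero_lt_one hN
  set F : ℝ → ℝ := fun E => (E - E₀) - (1/β) * Real.log ((N:ℝ) + Real.exp (β * (E - E₀)))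
    with hFdef
  have hpos : ∀ E : ℝ, 0 < (N:ℝ) + Real.exp (β * (E - E₀)) := fun E => by positivity
  have hderiv : ∀ E : ℝ, HasDerivAt F ((1 + Real.exp (β * (E - E₀)) / (N : ℝ))⁻¹) E := by
    intro E
    have h1 : HasDerivAt (fun E : ℝ => β * (E - E₀)) β E := by
      simpa using ((hasDerivAt_id E).sub_const E₀).const_mul β
    have h2 : HasDerivAt (fun E : ℝ => (N:ℝ) + Real.exp (β * (E - E₀)))
        (Real.exp (β * (E - E₀)) * β) E := (h1.exp).const_add _
    have h4 := (h2.log (ne_of_gt (hpos E))).const_mul (1/β)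
    have h5 := ((hasDerivAt_id E).sub_const E₀).sub h4
    refine h5.congr_deriv ?_
    have hE := hpos E
    have he : 0 < Real.exp (β * (E - E₀)) := Real.exp_pos _
    have hβ' : β ≠ 0 := ne_of_gt hβ
    field_simp
    ring
  have hcont : Continuous fun E : ℝ => (1 + Real.exp (β * (E - E₀)) / (N : ℝ))⁻¹ := by
    apply Continuous.inv₀
    · exact continuous_const.add ((Real.continuous_exp.comp
        (continuous_const.mul (continuous_id.sub continuous_const))).div_const _)
    · intro x; positivity
  have hint : ∀ E₁ : ℝ, (∫ E in E₀..E₁, (1 + Real.exp (β * (E - E₀)) / (N:ℝ))⁻¹)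
      = F E₁ - F E₀ := fun E₁ =>
    intervalIntegral.integral_eq_sub_of_hasDerivAt (fun E _ => hderiv E)
      (hcont.intervalIntegrable _ _)
  have hF0 : F E₀ = -(1/β) * Real.log ((N:ℝ) + 1) := by
    simp [hFdef]
  -- alternative form of F
  have hFalt : ∀ E : ℝ, F E = -(1/β) * Real.log (1 + (N:ℝ) * Real.exp (-(β * (E - E₀)))) := by
    intro E
    have he : (0:ℝ) < Real.exp (β * (E - E₀)) := Real.exp_pos _
    have h1 : (N:ℝ) + Real.exp (β * (E - E₀))
        = Real.exp (β * (E - E₀)) * (1 + (N:ℝ) * Real.exp (-(β * (E - E₀)))) := by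
      rw [mul_add, mul_one, mul_comm ((N:ℝ)) _, ← mul_assoc, ← Real.exp_add]
      simp [add_comm]
    have h2 : (0:ℝ) < 1 + (N:ℝ) * Real.exp (-(β * (E - E₀))) := by positivity
    simp only [hFdef]
    rw [h1, Real.log_mul (ne_of_gt he) (ne_of_gt h2), Real.log_exp]
    field_simp
    ring
  have hlim : Tendsto F atTop (nhds 0) := by
    have h1 : Tendsto (fun E : ℝ => β * (E - E₀)) atTop atTop :=
      (tendsto_atTop_add_const_right atTop (-E₀) tendsto_id).const_mul_atTop hβ
    have h2 : Tendsto (fun E : ℝ => Real.exp (-(β * (E - E₀)))) atTop (nhds 0) :=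
      Real.tendsto_exp_atBot.comp (tendsto_neg_atBot_iff.mpr h1)
    have h3 : Tendsto (fun E : ℝ => 1 + (N:ℝ) * Real.exp (-(β * (E - E₀)))) atTop (nhds 1) := by
      have := (h2.const_mul (N:ℝ)).const_add 1
      simpa using this
    have h4 : Tendsto (fun E : ℝ => Real.log (1 + (N:ℝ) * Real.exp (-(β * (E - E₀)))))
        atTop (nhds 0) := by
      have := (Real.continuousAt_log (by norm_num)).tendsto.comp h3
      simpa [Function.comp_def] using this
    have := h4.const_mul (-(1/β))
    simp only [mul_zero] at this
    refine this.congr fun E => ?_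
    rw [hFalt E]
  have key : Real.log ((N:ℝ)+1)/β = 0 - F E₀ := by rw [hF0]; field_simp; ring
  rw [key]
  exact (hlim.sub_const _).congr fun E₁ => (hint E₁).symm
end

section
/- Let k > 0, T > 0 be real numbers, ℓ ≥ 1 a natural number, and E₀ a real number. Setting N = 2^ℓ − 1 and β = 1/(kT), the improper integral from E₀ to ∞ of E ↦ (1 + e^{β(E−E₀)}/N)⁻¹ equals ℓ·kT·ln 2. (Hence, using a heat bath at temperature T, exactly ℓ·kT·ln 2 of work can be extracted from an ℓ-qubit system initially in a pure state, leaving the system fully mixed; equivalently, k T ln 2 of work per qubit.) -/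
open MeasureTheory

/-- Using a heat bath at temperature `T`, exactly `ℓ k T ln 2` of work can be extracted
from an `ℓ`-qubit system initially in a pure state: with `N = 2^ℓ − 1` unoccupied levels
and `β = 1/(kT)`, the improper integral from `E₀` to `∞` of the total occupation
probability `(1 + e^{β(E−E₀)}/N)⁻¹` equals `ℓ · kT · ln 2`. -/
theorem work_extraction_pure_qubits (k T : ℝ) (hk : 0 < k) (hT : 0 < T)
    (ℓ : ℕ) (hℓ : 1 ≤ ℓ) (E₀ : ℝ) :
    ∫ E in Set.Ioi E₀,
        (1 + Real.exp ((1 / (k * T)) * (E - E₀)) / ((2 : ℝ) ^ ℓ - 1))⁻¹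
      = (ℓ : ℝ) * (k * T * Real.log 2) := by
  set β : ℝ := 1 / (k * T) with hβ
  set N : ℝ := (2 : ℝ) ^ ℓ - 1 with hNdef
  have hkT : (0 : ℝ) < k * T := mul_pos hk hT
  have hkT' : k * T ≠ 0 := ne_of_gt hkT
  have hβpos : 0 < β := by positivity
  have hN : (1 : ℝ) ≤ N := by
    have : (2 : ℝ) ^ 1 ≤ (2 : ℝ) ^ ℓ := by
      apply pow_le_pow_right₀ (by norm_num) hℓ
    simp only [pow_one] at this
    simp only [hNdef]; linarith
  have hNpos : 0 < N := lt_of_lt_of_le one_pos hN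
  have hN1 : N + 1 = (2 : ℝ) ^ ℓ := by simp [hNdef]
  set f : ℝ → ℝ := fun E => (E - E₀) - (k * T) * Real.log (N + Real.exp (β * (E - E₀)))
    with hf
  have hderiv : ∀ x ∈ Set.Ici E₀,
      HasDerivAt f ((1 + Real.exp (β * (x - E₀)) / N)⁻¹) x := by
    intro x _
    have hE : HasDerivAt (fun E : ℝ => β * (E - E₀)) β x := by
      simpa using ((hasDerivAt_id x).sub_const E₀).const_mul β
    have hexp : HasDerivAt (fun E : ℝ => Real.exp (β * (E - E₀)))
        (Real.exp (β * (x - E₀)) * β) x := hE.exp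
    have hadd : HasDerivAt (fun E : ℝ => N + Real.exp (β * (E - E₀)))
        (Real.exp (β * (x - E₀)) * β) x := hexp.const_add N
    have hpos : 0 < N + Real.exp (β * (x - E₀)) :=
      add_pos hNpos (Real.exp_pos _)
    have hlog : HasDerivAt (fun E : ℝ => Real.log (N + Real.exp (β * (E - E₀))))
        (Real.exp (β * (x - E₀)) * β / (N + Real.exp (β * (x - E₀)))) x :=
      hadd.log (ne_of_gt hpos)
    have h := ((hasDerivAt_id x).sub_const E₀).sub (hlog.const_mul (k * T))
    convert h using 1
    · exact rfl
    · exact rfl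
    · exact rfl
    set e := Real.exp (β * (x - E₀)) with he
    have hNe : N + e ≠ 0 := ne_of_gt hpos
    have step : 1 - k * T * (e * β / (N + e)) = N / (N + e) := by
      rw [hβ]; field_simp; ring
    have step2 : (1 + e / N)⁻¹ = N / (N + e) := by
      rw [one_add_div (ne_of_gt hNpos), inv_div, add_comm]
    rw [step2, step]
  have hnonneg : ∀ x ∈ Set.Ioi E₀,
      0 ≤ (1 + Real.exp (β * (x - E₀)) / N)⁻¹ := by
    intro x _
    have : 0 < 1 + Real.exp (β * (x - E₀)) / N := by positivity
    exact le_of_lt (inv_pos.mpr this)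
  have htend : Filter.Tendsto f Filter.atTop (nhds 0) := by
    have heq : ∀ E : ℝ,
        f E = -(k * T) * Real.log (N * Real.exp (-(β * (E - E₀))) + 1) := by
      intro E
      have hpos : 0 < N + Real.exp (β * (E - E₀)) :=
        add_pos hNpos (Real.exp_pos _)
      have key : N * Real.exp (-(β * (E - E₀))) + 1
          = (N + Real.exp (β * (E - E₀))) * Real.exp (-(β * (E - E₀))) := by
        rw [add_mul, ← Real.exp_add]
        simp
      rw [hf]
      simp only
      rw [key, Real.log_mul (ne_of_gt hpos) (ne_of_gt (Real.exp_pos _)),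
        Real.log_exp]
      have hx : k * T * (β * (E - E₀)) = E - E₀ := by
        rw [hβ]; field_simp
      linear_combination -hx
    have h1 : Filter.Tendsto (fun E : ℝ => -(β * (E - E₀))) Filter.atTop Filter.atBot := by
      apply Filter.tendsto_neg_atBot_iff.mpr
      have hsub : Filter.Tendsto (fun E : ℝ => E - E₀) Filter.atTop Filter.atTop := by
        simpa [sub_eq_add_neg] using
          Filter.tendsto_atTop_add_const_right Filter.atTop (-E₀) Filter.tendsto_id
      exact hsub.const_mul_atTop hβpos
    have h2 : Filter.Tendsto (fun E : ℝ => N * Real.exp (-(β * (E - E₀))) + 1)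
        Filter.atTop (nhds 1) := by
      have := ((Real.tendsto_exp_atBot.comp h1).const_mul N).add_const 1
      simpa using this
    have h3 : Filter.Tendsto (fun E : ℝ =>
        -(k * T) * Real.log (N * Real.exp (-(β * (E - E₀))) + 1))
        Filter.atTop (nhds 0) := by
      have := (Real.continuousAt_log (by norm_num : (1:ℝ) ≠ 0)).tendsto.comp h2
      simp only [Real.log_one] at this
      simpa using this.const_mul (-(k * T))
    exact (Filter.tendsto_congr heq).mpr h3
  have key := MeasureTheory.integral_Ioi_of_hasDerivAt_of_nonneg' hderiv hnonneg htend
  have hfE₀ : f E₀ = -(k * T) * ((ℓ : ℝ) * Real.log 2) := by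
    rw [hf]
    simp only [sub_self, mul_zero, Real.exp_zero, hN1]
    rw [Real.log_pow]
    ring
  rw [hfE₀] at key
  calc ∫ E in Set.Ioi E₀,
        (1 + Real.exp ((1 / (k * T)) * (E - E₀)) / ((2 : ℝ) ^ ℓ - 1))⁻¹
      = ∫ x in Set.Ioi E₀, (1 + Real.exp (β * (x - E₀)) / N)⁻¹ := by rfl
    _ = 0 - -(k * T) * ((ℓ : ℝ) * Real.log 2) := key
    _ = (ℓ : ℝ) * (k * T * Real.log 2) := by ring
end

section
/- Let ψ and φ be unit vectors in ℂ^{d_A} ⊗ ℂ^{d_B} whose reduced density matrices on the first factor coincide: Tr₂|ψ⟩⟨ψ| = Tr₂|φ⟩⟨φ|. Then there exists a unitary d_B × d_B matrix U such that (I_{d_A} ⊗ U)ψ = φ. That is, any two purifications of the same state, with purifying systems of equal dimension, are related by a unitary transformation acting only on the purifying system. -/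
open scoped BigOperators

/-- The von Neumann entropy (base 2) of a matrix, via its eigenvalues
(with the convention `0 · log₂ 0 = 0`); defined to be `0` on non-Hermitian matrices. -/
noncomputable def vnEntropy {n : Type*} [Fintype n] [DecidableEq n]
    (ρ : Matrix n n ℂ) : ℝ :=
  if h : ρ.IsHermitian then -∑ i, h.eigenvalues i * Real.logb 2 (h.eigenvalues i) else 0

/-- Partial trace over the first tensor factor. -/
noncomputable def ptrFst {dA dB : ℕ}
    (ρ : Matrix (Fin dA × Fin dB) (Fin dA × Fin dB) ℂ) : Matrix (Fin dB) (Fin dB) ℂ :=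
  fun j j' => ∑ i, ρ (i, j) (i, j')

/-- Partial trace over the second tensor factor. -/
noncomputable def ptrSnd {dA dB : ℕ}
    (ρ : Matrix (Fin dA × Fin dB) (Fin dA × Fin dB) ℂ) : Matrix (Fin dA) (Fin dA) ℂ :=
  fun i i' => ∑ j, ρ (i, j) (i', j)

/-- The rank-one density matrix `|ψ⟩⟨ψ|` associated with a vector `ψ`. -/
noncomputable def outerProj {ι : Type*} (ψ : ι → ℂ) : Matrix ι ι ℂ :=
  fun i j => ψ i * star (ψ j)

/-- The maximally entangled state `Ψ_d = d^{−1/2} ∑ᵢ eᵢ ⊗ eᵢ` on `ℂ^d ⊗ ℂ^d`. -/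
noncomputable def maxEnt (d : ℕ) : Fin d × Fin d → ℂ :=
  fun p => if p.1 = p.2 then ((Real.sqrt d)⁻¹ : ℝ) else 0

open Complex Matrix

section Aux

open Complex Matrix

theorem gram_sum_eq' {da db : ℕ} (P : Matrix (Fin da) (Fin db) ℂ) (x : Fin da → ℂ) :
    ∑ j, starRingEnd ℂ (Pᴴ.mulVec x j) * (Pᴴ.mulVec x j)
      = ∑ i, ∑ i', starRingEnd ℂ (x i') * x i * (P * Pᴴ) i' i := by
  simp only [Matrix.mulVec, dotProduct, Matrix.conjTranspose_apply, Matrix.mul_apply,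
    map_sum, Finset.mul_sum, Finset.sum_mul, starRingEnd_apply, star_mul', star_star]
  rw [Finset.sum_comm]
  refine Finset.sum_congr rfl fun i _ => ?_
  rw [Finset.sum_comm]
  refine Finset.sum_congr rfl fun i' _ => ?_
  refine Finset.sum_congr rfl fun j _ => ?_
  ring

theorem exists_unitary_of_gram {da db : ℕ} (M N : Matrix (Fin da) (Fin db) ℂ)
    (h : M * Mᴴ = N * Nᴴ) :
    ∃ W : Matrix (Fin db) (Fin db) ℂ, W ∈ Matrix.unitaryGroup (Fin db) ℂ ∧ W * Mᴴ = Nᴴ := by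
  classical
  let F : EuclideanSpace ℂ (Fin da) →ₗ[ℂ] EuclideanSpace ℂ (Fin db) := Matrix.toEuclideanLin Mᴴ
  let G : EuclideanSpace ℂ (Fin da) →ₗ[ℂ] EuclideanSpace ℂ (Fin db) := Matrix.toEuclideanLin Nᴴ
  have hinner : ∀ x : EuclideanSpace ℂ (Fin da),
      (inner ℂ (F x) (F x) : ℂ) = inner ℂ (G x) (G x) := by
    intro x
    simp only [PiLp.inner_apply, RCLike.inner_apply]
    show ∑ j, (Mᴴ.mulVec x.ofLp j) * starRingEnd ℂ (Mᴴ.mulVec x.ofLp j)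
        = ∑ j, (Nᴴ.mulVec x.ofLp j) * starRingEnd ℂ (Nᴴ.mulVec x.ofLp j)
    simp only [mul_comm ((Mᴴ *ᵥ x.ofLp) _), mul_comm ((Nᴴ *ᵥ x.ofLp) _)]
    rw [gram_sum_eq', gram_sum_eq', h]
  have hnorm : ∀ x : EuclideanSpace ℂ (Fin da), ‖F x‖ = ‖G x‖ := by
    intro x
    have h1 := hinner x
    rw [inner_self_eq_norm_sq_to_K, inner_self_eq_norm_sq_to_K] at h1
    have h2 : ‖F x‖ ^ 2 = ‖G x‖ ^ 2 := by exact_mod_cast h1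
    have := congrArg Real.sqrt h2
    rwa [Real.sqrt_sq (norm_nonneg _), Real.sqrt_sq (norm_nonneg _)] at this
  have hker : LinearMap.ker F ≤ LinearMap.ker G := by
    intro x hx
    rw [LinearMap.mem_ker] at hx ⊢
    have := hnorm x
    rw [hx, norm_zero] at this
    exact norm_eq_zero.mp this.symm
  let L : ↥(LinearMap.range F) →ₗ[ℂ] EuclideanSpace ℂ (Fin db) :=
    (Submodule.liftQ (LinearMap.ker F) G hker) ∘ₗ F.quotKerEquivRange.symm.toLinearMap
  have hLF : ∀ x, L ⟨F x, LinearMap.mem_range_self F x⟩ = G x := by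
    intro x
    simp only [L, LinearMap.comp_apply, LinearEquiv.coe_toLinearMap,
      LinearMap.quotKerEquivRange_symm_apply_image, Submodule.mkQ_apply, Submodule.liftQ_apply]
  let Li : ↥(LinearMap.range F) →ₗᵢ[ℂ] EuclideanSpace ℂ (Fin db) :=
    ⟨L, by
      rintro ⟨_, x, rfl⟩
      rw [hLF x]
      exact (hnorm x).symm⟩
  let Wi : EuclideanSpace ℂ (Fin db) →ₗᵢ[ℂ] EuclideanSpace ℂ (Fin db) := Li.extend
  have hWext : ∀ x, Wi (F x) = G x := by
    intro x
    have h1 := Li.extend_apply ⟨F x, LinearMap.mem_range_self F x⟩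
    have h2 : Li ⟨F x, LinearMap.mem_range_self F x⟩ = G x := hLF x
    rw [h2] at h1
    exact h1
  let Wm : Matrix (Fin db) (Fin db) ℂ := Matrix.toEuclideanLin.symm
    (Wi.toLinearMap)
  have hWm : ∀ v : EuclideanSpace ℂ (Fin db), Wm.mulVec v.ofLp = (Wi v).ofLp := by
    intro v
    have := congrArg (fun f => (f v).ofLp) (Matrix.toEuclideanLin.apply_symm_apply Wi.toLinearMap)
    exact this
  have hsingle : ∀ (j k : Fin db),
      Wm k j = Wi ((EuclideanSpace.single j 1 : EuclideanSpace ℂ (Fin db))) k := by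
    intro j k
    have := congrFun (hWm (EuclideanSpace.single j 1)) k
    rw [PiLp.ofLp_single, Matrix.mulVec_single] at this
    simp only [MulOpposite.op_one, one_smul, Matrix.col_apply] at this
    exact this
  have hU : star Wm * Wm = 1 := by
    ext j j'
    rw [Matrix.mul_apply, Matrix.one_apply]
    have heq : ∀ k, (star Wm) j k * Wm k j'
        = starRingEnd ℂ (Wi (EuclideanSpace.single j 1) k) * Wi (EuclideanSpace.single j' 1) k := by
      intro k
      rw [Matrix.star_apply, hsingle j k, hsingle j' k]
      rfl
    rw [Finset.sum_congr rfl fun k _ => heq k]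
    have h2 : (inner ℂ (Wi (EuclideanSpace.single j 1)) (Wi (EuclideanSpace.single j' 1)) : ℂ)
        = ∑ k, starRingEnd ℂ (Wi (EuclideanSpace.single j 1) k)
            * Wi (EuclideanSpace.single j' 1) k := by
      rw [PiLp.inner_apply]
      simp only [RCLike.inner_apply]
      exact Finset.sum_congr rfl fun k _ => mul_comm _ _
    rw [← h2, LinearIsometry.inner_map_map]
    rw [EuclideanSpace.inner_single_left]
    simp [EuclideanSpace.single_apply, eq_comm]
  refine ⟨Wm, Matrix.mem_unitaryGroup_iff'.mpr hU, ?_⟩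
  have hcol : ∀ x : Fin da → ℂ, (Wm * Mᴴ).mulVec x = Nᴴ.mulVec x := by
    intro x
    rw [← Matrix.mulVec_mulVec]
    have := hWm (F (WithLp.toLp 2 x))
    rw [hWext] at this
    exact this
  ext j i
  have := congrFun (hcol (Pi.single i 1)) j
  rw [Matrix.mulVec_single, Matrix.mulVec_single] at this
  simpa using this

end Aux

open Kronecker in
theorem purifications_related_by_unitary' (dA dB : ℕ) (ψ φ : Fin dA × Fin dB → ℂ)
    (hψ : ∑ p, ‖ψ p‖ ^ 2 = 1) (hφ : ∑ p, ‖φ p‖ ^ 2 = 1)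
    (h : ptrSnd (outerProj ψ) = ptrSnd (outerProj φ)) :
    ∃ U : Matrix (Fin dB) (Fin dB) ℂ, U ∈ Matrix.unitaryGroup (Fin dB) ℂ ∧
      ((1 : Matrix (Fin dA) (Fin dA) ℂ) ⊗ₖ U).mulVec ψ = φ := by
  classical
  set M : Matrix (Fin dA) (Fin dB) ℂ := Matrix.of fun i j => ψ (i, j) with hM
  set N : Matrix (Fin dA) (Fin dB) ℂ := Matrix.of fun i j => φ (i, j) with hN
  have hgram : M * Mᴴ = N * Nᴴ := by
    ext i i'
    have h0 : ptrSnd (outerProj ψ) i i' = ptrSnd (outerProj φ) i i' := by rw [h]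
    simp only [ptrSnd, outerProj] at h0
    simp only [Matrix.mul_apply, Matrix.conjTranspose_apply, hM, hN, Matrix.of_apply]
    exact h0
  obtain ⟨W, hWu, hWM⟩ := exists_unitary_of_gram M N hgram
  have key : ∀ i j, ∑ j', starRingEnd ℂ (W j j') * ψ (i, j') = φ (i, j) := by
    intro i j
    have h3 : (W * Mᴴ) j i = Nᴴ j i := by rw [hWM]
    have h4 := congrArg (starRingEnd ℂ) h3
    simpa [Matrix.mul_apply, Matrix.conjTranspose_apply, map_sum, hM, hN,
      Complex.conj_conj] using h4
  refine ⟨W.map (starRingEnd ℂ), ?_, ?_⟩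
  · rw [Matrix.mem_unitaryGroup_iff']
    have h1 : star W * W = 1 := Matrix.mem_unitaryGroup_iff'.mp hWu
    ext j j'
    have h2 : (star W * W) j j' = (1 : Matrix (Fin dB) (Fin dB) ℂ) j j' := by rw [h1]
    simp only [Matrix.mul_apply, Matrix.star_apply, Matrix.map_apply, Matrix.one_apply] at h2 ⊢
    have h6 := congrArg (starRingEnd ℂ) h2
    simp only [map_sum, _root_.map_mul, apply_ite (starRingEnd ℂ), _root_.map_one, _root_.map_zero,
      starRingEnd_apply, star_star] at h6
    simp only [starRingEnd_apply] at h6 ⊢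
    simpa [star_star] using h6
  · funext p
    obtain ⟨i, j⟩ := p
    show ∑ p', ((1 : Matrix (Fin dA) (Fin dA) ℂ) ⊗ₖ W.map (starRingEnd ℂ)) (i, j) p' * ψ p' = φ (i, j)
    rw [Fintype.sum_prod_type]
    have : ∀ i' j', ((1 : Matrix (Fin dA) (Fin dA) ℂ) ⊗ₖ W.map (starRingEnd ℂ)) (i, j) (i', j')
        = (if i = i' then 1 else 0) * starRingEnd ℂ (W j j') := by
      intro i' j'
      simp [Matrix.kroneckerMap_apply, Matrix.one_apply]
    simp only [this, ite_mul, one_mul, zero_mul, mul_assoc]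
    rw [Finset.sum_comm]
    simp only [Finset.sum_ite_eq, Finset.mem_univ, if_true]
    exact key i j

open Kronecker in
/-- Any two purifications (with purifying systems of equal dimension) of the same
density matrix are related by a unitary on the purifying system: if unit vectors
`ψ, φ ∈ ℂ^{d_A} ⊗ ℂ^{d_B}` satisfy `Tr₂|ψ⟩⟨ψ| = Tr₂|φ⟩⟨φ|`, then there is a
unitary `U` on `ℂ^{d_B}` with `(I ⊗ U)ψ = φ`. -/
theorem purifications_related_by_unitary (dA dB : ℕ) (ψ φ : Fin dA × Fin dB → ℂ)
    (hψ : ∑ p, ‖ψ p‖ ^ 2 = 1) (hφ : ∑ p, ‖φ p‖ ^ 2 = 1)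
    (h : ptrSnd (outerProj ψ) = ptrSnd (outerProj φ)) :
    ∃ U : Matrix (Fin dB) (Fin dB) ℂ, U ∈ Matrix.unitaryGroup (Fin dB) ℂ ∧
      ((1 : Matrix (Fin dA) (Fin dA) ℂ) ⊗ₖ U).mulVec ψ = φ := by
  exact purifications_related_by_unitary' dA dB ψ φ hψ hφ h
end
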